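/- Let G be a {C₃, C₄}-free graph of maximum degree at most d (d ≥ 3), and let M be an induced matching of G that is maximal and stable under the local-search exchange operation. Then |M| ≥ m(G)/d². -/
import Mathlib


open Classical

variable {V : Type*}

/-- Two edges (as `Sym2 V`) are in conflict: they are at distance at most 2
in the line graph, i.e. they share a vertex or some edge of `G` joins them. -/
def Conflict (G : SimpleGraph V) (e f : Sym2 V) : Prop :=
  ∃ a ∈ e, ∃ b ∈ f, a = b ∨ G.Adj a b

/-- `C_G(e)`: the set of edges of `G` in conflict with `e` (including `e`). -/
def CSet (G : SimpleGraph V) (e : Sym2 V) : Set (Sym2 V) :=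
  {f | f ∈ G.edgeSet ∧ Conflict G e f}

/-- `PC_G(M, e)`: the private conflict edges of `e` with respect to `M`. -/
def PCSet (G : SimpleGraph V) (M : Set (Sym2 V)) (e : Sym2 V) : Set (Sym2 V) :=
  CSet G e \ ⋃ f ∈ M \ {e}, CSet G f

/-- `M` is an induced matching of `G`. -/
def IsInducedMatching (G : SimpleGraph V) (M : Set (Sym2 V)) : Prop :=
  M ⊆ G.edgeSet ∧ ∀ e ∈ M, ∀ f ∈ M, e ≠ f → ¬ Conflict G e f

/-- `M` is a maximal induced matching of `G`. -/
def IsMaximalInducedMatching (G : SimpleGraph V) (M : Set (Sym2 V)) : Prop :=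
  IsInducedMatching G M ∧ ∀ M', IsInducedMatching G M' → M ⊆ M' → M' = M

/-- `M` is stable under the local-search exchange operation: any two distinct
private conflict edges of an edge of `M` conflict with each other. -/
def LSStable (G : SimpleGraph V) (M : Set (Sym2 V)) : Prop :=
  ∀ e ∈ M, ∀ e' ∈ PCSet G M e, ∀ e'' ∈ PCSet G M e, e' ≠ e'' → e'' ∈ CSet G e'

/-- The edges of `G` with both endpoints in `S`. -/
def edgesWithin (G : SimpleGraph V) (S : Set V) : Set (Sym2 V) :=
  {e | e ∈ G.edgeSet ∧ ∀ a ∈ e, a ∈ S}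

/-- The edges of `G` with one endpoint in `S` and the other in `T`. -/
def edgesBetween (G : SimpleGraph V) (S T : Set V) : Set (Sym2 V) :=
  {e | e ∈ G.edgeSet ∧ ∃ a b : V, e = s(a, b) ∧ a ∈ S ∧ b ∈ T}

/-- `G` has no induced cycle of length 4. -/
def C4Free (G : SimpleGraph V) : Prop :=
  ¬ ∃ a b c d : V, G.Adj a b ∧ G.Adj b c ∧ G.Adj c d ∧ G.Adj d a ∧
      ¬ G.Adj a c ∧ ¬ G.Adj b d ∧ a ≠ c ∧ b ≠ d

/-- `G` has no induced cycle of length 5. -/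
def C5Free (G : SimpleGraph V) : Prop :=
  ¬ ∃ a b c d e : V, G.Adj a b ∧ G.Adj b c ∧ G.Adj c d ∧ G.Adj d e ∧ G.Adj e a ∧
      ¬ G.Adj a c ∧ ¬ G.Adj a d ∧ ¬ G.Adj b d ∧ ¬ G.Adj b e ∧ ¬ G.Adj c e ∧
      a ≠ c ∧ a ≠ d ∧ b ≠ d ∧ b ≠ e ∧ c ≠ e

/-- `G` has no induced `K_{1,3}` (claw). -/
def ClawFree (G : SimpleGraph V) : Prop :=
  ¬ ∃ v a b c : V, G.Adj v a ∧ G.Adj v b ∧ G.Adj v c ∧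
      ¬ G.Adj a b ∧ ¬ G.Adj a c ∧ ¬ G.Adj b c ∧ a ≠ b ∧ a ≠ c ∧ b ≠ c

/- ===================== Auxiliary development ===================== -/

section Aux

variable {G : SimpleGraph V}

private lemma conflict_symm {e f : Sym2 V} (h : Conflict G e f) : Conflict G f e := by
  obtain ⟨a, ha, b, hb, hab⟩ := h
  refine ⟨b, hb, a, ha, ?_⟩
  rcases hab with rfl | h
  · exact Or.inl rfl
  · exact Or.inr h.symm

private lemma conflict_elim {a b c d : V} (h : Conflict G s(a,b) s(c,d)) :
    (a = c ∨ G.Adj a c) ∨ (a = d ∨ G.Adj a d) ∨ (b = c ∨ G.Adj b c) ∨ (b = d ∨ G.Adj b d) := by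
  obtain ⟨x, hx, y, hy, hxy⟩ := h
  rw [Sym2.mem_iff] at hx hy
  rcases hx with rfl | rfl <;> rcases hy with rfl | rfl <;> tauto

private lemma conflict_wit {u v : V} {f : Sym2 V} (h : Conflict G s(u,v) f) :
    ∃ b ∈ f, b = u ∨ b = v ∨ G.Adj u b ∨ G.Adj v b := by
  obtain ⟨a, ha, b, hb, hab⟩ := h
  rw [Sym2.mem_iff] at ha
  refine ⟨b, hb, ?_⟩
  rcases ha with rfl | rfl
  · rcases hab with h | h
    · exact Or.inl h.symm
    · exact Or.inr (Or.inr (Or.inl h))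
  · rcases hab with h | h
    · exact Or.inr (Or.inl h.symm)
    · exact Or.inr (Or.inr (Or.inr h))

private lemma n4_lemma
    (t3 : ∀ a b c : V, G.Adj a b → G.Adj a c → G.Adj b c → False)
    (c4 : ∀ a b c e : V, G.Adj a b → G.Adj b c → G.Adj c e → G.Adj e a → a ≠ c → b ≠ e → False)
    {p q x y z : V} (hpq : G.Adj p q) (hpx : G.Adj p x) (hxq : x ≠ q)
    (hyz : G.Adj y z) (hqy : G.Adj q y) (hqz : ¬ G.Adj q z) (hpy : ¬ G.Adj p y)
    (hpz : ¬ G.Adj p z) (hyp : y ≠ p) (hzp : z ≠ p)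
    (hc : Conflict G s(p,x) s(y,z)) : G.Adj x z := by
  rcases conflict_elim hc with (h | h) | (h | h) | (h | h) | (h | h)
  · exact (hyp h.symm).elim
  · exact (hpy h).elim
  · exact (hzp h.symm).elim
  · exact (hpz h).elim
  · exact (hpy (h ▸ hpx)).elim
  · exact (c4 p x y q hpx h hqy.symm hpq.symm (Ne.symm hyp) hxq).elim
  · exact (hpz (h ▸ hpx)).elim
  · exact h

private lemma h1_lemma
    (t3 : ∀ a b c : V, G.Adj a b → G.Adj a c → G.Adj b c → False)
    (c4 : ∀ a b c e : V, G.Adj a b → G.Adj b c → G.Adj c e → G.Adj e a → a ≠ c → b ≠ e → False)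
    {q y z y' z' : V}
    (hqy : G.Adj q y) (hqy' : G.Adj q y') (hyz : G.Adj y z) (hy'z' : G.Adj y' z')
    (hqz : ¬ G.Adj q z) (hqz' : ¬ G.Adj q z') (hzq : z ≠ q) (hz'q : z' ≠ q)
    (hyy' : y ≠ y') (hc : Conflict G s(y,z) s(y',z')) : z ≠ z' ∧ G.Adj z z' := by
  rcases conflict_elim hc with (h | h) | (h | h) | (h | h) | (h | h)
  · exact (hyy' h).elim
  · exact (t3 q y y' hqy hqy' h).elim
  · exact (hqz' (h ▸ hqy)).elim
  · exact (c4 q y z' y' hqy h hy'z'.symm hqy'.symm (Ne.symm hz'q) hyy').elim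
  · exact (hqz (by rw [h]; exact hqy')).elim
  · exact (c4 q y' z y hqy' h.symm hyz.symm hqy.symm (Ne.symm hzq) (Ne.symm hyy')).elim
  · exact (c4 y z y' q hyz (by rw [h]; exact hy'z'.symm) hqy'.symm hqy hyy' hzq).elim
  · exact ⟨h.ne, h⟩

private lemma card_split [Fintype V] {u v : V} {S : Finset (Sym2 V)}
    (hconf : ∀ f ∈ S, Conflict G s(u,v) f) :
    S.card ≤ (S.filter (fun f => u ∈ f)).card + (S.filter (fun f => v ∈ f)).card
      + (S.filter (fun f => v ∉ f ∧ u ∉ f ∧ ∃ x ∈ f, G.Adj u x)).card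
      + (S.filter (fun f => u ∉ f ∧ v ∉ f ∧ ∃ x ∈ f, G.Adj v x)).card := by
  have hsub : S ⊆ ((S.filter (fun f => u ∈ f) ∪ S.filter (fun f => v ∈ f)) ∪
      (S.filter (fun f => v ∉ f ∧ u ∉ f ∧ ∃ x ∈ f, G.Adj u x) ∪
       S.filter (fun f => u ∉ f ∧ v ∉ f ∧ ∃ x ∈ f, G.Adj v x))) := by
    intro f hf
    by_cases hu : u ∈ f
    · exact Finset.mem_union_left _ (Finset.mem_union_left _
        (Finset.mem_filter.mpr ⟨hf, hu⟩))
    by_cases hv : v ∈ f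
    · exact Finset.mem_union_left _ (Finset.mem_union_right _
        (Finset.mem_filter.mpr ⟨hf, hv⟩))
    obtain ⟨b, hb, hbc⟩ := conflict_wit (hconf f hf)
    rcases hbc with rfl | rfl | h | h
    · exact (hu hb).elim
    · exact (hv hb).elim
    · exact Finset.mem_union_right _ (Finset.mem_union_left _
        (Finset.mem_filter.mpr ⟨hf, hv, hu, b, hb, h⟩))
    · exact Finset.mem_union_right _ (Finset.mem_union_right _
        (Finset.mem_filter.mpr ⟨hf, hu, hv, b, hb, h⟩))
  have h1 := Finset.card_le_card hsub
  have h2 := Finset.card_union_le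
    (S.filter (fun f => u ∈ f) ∪ S.filter (fun f => v ∈ f))
    (S.filter (fun f => v ∉ f ∧ u ∉ f ∧ ∃ x ∈ f, G.Adj u x) ∪
     S.filter (fun f => u ∉ f ∧ v ∉ f ∧ ∃ x ∈ f, G.Adj v x))
  have h3 := Finset.card_union_le (S.filter (fun f => u ∈ f)) (S.filter (fun f => v ∈ f))
  have h4 := Finset.card_union_le
    (S.filter (fun f => v ∉ f ∧ u ∉ f ∧ ∃ x ∈ f, G.Adj u x))
    (S.filter (fun f => u ∉ f ∧ v ∉ f ∧ ∃ x ∈ f, G.Adj v x))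
  omega

private lemma star_bound [Fintype V] {d : ℕ}
    (hΔ : ∀ w : V, (G.neighborSet w).ncard ≤ d) {p q : V} (hpq : G.Adj p q)
    {S : Finset (Sym2 V)} (hE : ∀ f ∈ S, f ∈ G.edgeSet) (hne : s(p,q) ∉ S) :
    (S.filter (fun f => p ∈ f)).card + 1 ≤ d := by
  set nb : V → Finset V := fun x => (Set.toFinite (G.neighborSet x)).toFinset with hnbdef
  have hnb : ∀ x a : V, a ∈ nb x ↔ G.Adj x a := by
    intro x a
    rw [hnbdef]
    simp [Set.Finite.mem_toFinset, SimpleGraph.mem_neighborSet]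
  have hnbcard : ∀ x : V, (nb x).card ≤ d := by
    intro x
    rw [hnbdef, ← Set.ncard_eq_toFinset_card]
    exact hΔ x
  have hsub : S.filter (fun f => p ∈ f) ⊆ ((nb p).erase q).image (fun x => s(p, x)) := by
    intro f hf
    obtain ⟨hfS, hpf⟩ := Finset.mem_filter.mp hf
    obtain ⟨x, rfl⟩ := Sym2.mem_iff_exists.mp hpf
    have hpx : G.Adj p x := G.mem_edgeSet.mp (hE _ hfS)
    have hxq : x ≠ q := by rintro rfl; exact hne hfS
    exact Finset.mem_image.mpr ⟨x, Finset.mem_erase.mpr ⟨hxq, (hnb p x).mpr hpx⟩, rfl⟩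
  have h1 : (S.filter (fun f => p ∈ f)).card ≤ ((nb p).erase q).card :=
    (Finset.card_le_card hsub).trans Finset.card_image_le
  have h2 : q ∈ nb p := (hnb p q).mpr hpq
  have h3 := Finset.card_erase_add_one h2
  have h4 := hnbcard p
  omega

private lemma wing_bound [Fintype V] {k : ℕ}
    (hΔ : ∀ w : V, (G.neighborSet w).ncard ≤ k + 1) {p q : V} (hpq : G.Adj p q)
    {S : Finset (Sym2 V)} (hE : ∀ f ∈ S, f ∈ G.edgeSet) :
    (S.filter (fun f => q ∉ f ∧ p ∉ f ∧ ∃ x ∈ f, G.Adj p x)).card ≤ k * k := by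
  set nb : V → Finset V := fun x => (Set.toFinite (G.neighborSet x)).toFinset with hnbdef
  have hnb : ∀ x a : V, a ∈ nb x ↔ G.Adj x a := by
    intro x a
    rw [hnbdef]
    simp [Set.Finite.mem_toFinset, SimpleGraph.mem_neighborSet]
  have hnbcard : ∀ x : V, (nb x).card ≤ k + 1 := by
    intro x
    rw [hnbdef, ← Set.ncard_eq_toFinset_card]
    exact hΔ x
  set T := (nb p).erase q with hT
  have hsub : S.filter (fun f => q ∉ f ∧ p ∉ f ∧ ∃ x ∈ f, G.Adj p x)
      ⊆ (T.sigma (fun x => (nb x).erase p)).image (fun a => s(a.1, a.2)) := by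
    intro f hf
    obtain ⟨hfS, hqf, hpf, x, hxf, hpx⟩ := Finset.mem_filter.mp hf
    obtain ⟨w, rfl⟩ := Sym2.mem_iff_exists.mp hxf
    have hxw : G.Adj x w := G.mem_edgeSet.mp (hE _ hfS)
    have hxq : x ≠ q := by rintro rfl; exact hqf (Sym2.mem_mk_left _ _)
    have hwp : w ≠ p := by rintro rfl; exact hpf (Sym2.mem_mk_right _ _)
    refine Finset.mem_image.mpr ⟨⟨x, w⟩, Finset.mem_sigma.mpr ⟨?_, ?_⟩, rfl⟩
    · exact Finset.mem_erase.mpr ⟨hxq, (hnb p x).mpr hpx⟩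
    · exact Finset.mem_erase.mpr ⟨hwp, (hnb x w).mpr hxw⟩
  have h1 : (S.filter (fun f => q ∉ f ∧ p ∉ f ∧ ∃ x ∈ f, G.Adj p x)).card
      ≤ (T.sigma (fun x => (nb x).erase p)).card :=
    (Finset.card_le_card hsub).trans Finset.card_image_le
  have h2 : (T.sigma (fun x => (nb x).erase p)).card = ∑ x ∈ T, ((nb x).erase p).card :=
    Finset.card_sigma _ _
  have h3 : ∑ x ∈ T, ((nb x).erase p).card ≤ T.card • k := by
    refine Finset.sum_le_card_nsmul _ _ _ ?_
    intro x hx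
    have hx' : G.Adj p x := (hnb p x).mp (Finset.mem_of_mem_erase (hT ▸ hx))
    have hpmem : p ∈ nb x := (hnb x p).mpr hx'.symm
    have := Finset.card_erase_add_one hpmem
    have := hnbcard x
    omega
  have h4 : T.card ≤ k := by
    rw [hT]
    have hq : q ∈ nb p := (hnb p q).mpr hpq
    have := Finset.card_erase_add_one hq
    have := hnbcard p
    omega
  have h5 : T.card • k ≤ k * k := by
    rw [smul_eq_mul]
    exact Nat.mul_le_mul_right _ h4
  exact h1.trans (le_of_eq_of_le h2 (h3.trans h5))

private lemma key_bound [Fintype V] {d : ℕ} (hd : 3 ≤ d)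
    (hΔ : ∀ w : V, (G.neighborSet w).ncard ≤ d)
    (t3 : ∀ a b c : V, G.Adj a b → G.Adj a c → G.Adj b c → False)
    (c4 : ∀ a b c e : V, G.Adj a b → G.Adj b c → G.Adj c e → G.Adj e a → a ≠ c → b ≠ e → False)
    {p q : V} (hpq : G.Adj p q) {P₀ : Finset (Sym2 V)}
    (hE : ∀ f ∈ P₀, f ∈ G.edgeSet) (hne : s(p,q) ∉ P₀)
    (hpair : ∀ f ∈ P₀, ∀ g ∈ P₀, f ≠ g → Conflict G f g) :
    (P₀.filter (fun f => p ∈ f)).card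
      + (P₀.filter (fun f => p ∉ f ∧ q ∉ f ∧ ∃ x ∈ f, G.Adj q x)).card + 1 ≤ d := by
  set Fp := P₀.filter (fun f => p ∈ f) with hFpdef
  set Fq := P₀.filter (fun f => p ∉ f ∧ q ∉ f ∧ ∃ x ∈ f, G.Adj q x) with hFqdef
  set nb : V → Finset V := fun x => (Set.toFinite (G.neighborSet x)).toFinset with hnbdef
  have hnb : ∀ x a : V, a ∈ nb x ↔ G.Adj x a := by
    intro x a
    rw [hnbdef]
    simp [Set.Finite.mem_toFinset, SimpleGraph.mem_neighborSet]
  have hnbcard : ∀ x : V, (nb x).card ≤ d := by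
    intro x
    rw [hnbdef, ← Set.ncard_eq_toFinset_card]
    exact hΔ x
  have hFprep : ∀ f ∈ Fp, ∃ x, f = s(p,x) ∧ G.Adj p x ∧ x ≠ q := by
    intro f hf
    obtain ⟨hfP, hpf⟩ := Finset.mem_filter.mp hf
    obtain ⟨x, rfl⟩ := Sym2.mem_iff_exists.mp hpf
    refine ⟨x, rfl, G.mem_edgeSet.mp (hE _ hfP), ?_⟩
    rintro rfl; exact hne hfP
  have hFqrep : ∀ g ∈ Fq, ∃ y z, g = s(y,z) ∧ G.Adj y z ∧ G.Adj q y ∧ ¬G.Adj q z ∧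
      ¬G.Adj p y ∧ ¬G.Adj p z ∧ y ≠ p ∧ y ≠ q ∧ z ≠ p ∧ z ≠ q := by
    intro g hg
    obtain ⟨hgP, hpg, hqg, y, hyg, hqy⟩ := Finset.mem_filter.mp hg
    obtain ⟨z, rfl⟩ := Sym2.mem_iff_exists.mp hyg
    have hyz : G.Adj y z := G.mem_edgeSet.mp (hE _ hgP)
    rw [Sym2.mem_iff] at hpg hqg
    push_neg at hpg hqg
    have hqz : ¬ G.Adj q z := fun h => t3 q y z hqy h hyz
    refine ⟨y, z, rfl, hyz, hqy, hqz, ?_, ?_, hpg.1.symm, hqg.1.symm, hpg.2.symm, hqg.2.symm⟩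
    · exact fun h => t3 p q y hpq h hqy
    · exact fun h => c4 p z y q h hyz.symm hqy.symm hpq.symm hpg.1 (Ne.symm hqg.2)
  have hFpE : ∀ f ∈ Fp, f ∈ P₀ := fun f hf => (Finset.mem_filter.mp hf).1
  have hFqE : ∀ f ∈ Fq, f ∈ P₀ := fun f hf => (Finset.mem_filter.mp hf).1
  have hFpcard : Fp.card + 1 ≤ d := star_bound hΔ hpq hE hne
  by_cases h2 : 2 ≤ Fp.card
  · -- at least two edges at p : Fq is empty
    have hFq : Fq = ∅ := by
      obtain ⟨f1, hf1, f2, hf2, h12⟩ := Finset.one_lt_card.mp (by omega : 1 < Fp.card)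
      obtain ⟨x1, hf1eq, hpx1, hx1q⟩ := hFprep f1 hf1
      obtain ⟨x2, hf2eq, hpx2, hx2q⟩ := hFprep f2 hf2
      have hx12 : x1 ≠ x2 := by rintro rfl; exact h12 (hf1eq.trans hf2eq.symm)
      rw [Finset.eq_empty_iff_forall_notMem]
      intro g hg
      obtain ⟨y, z, hgeq, hyz, hqy, hqz, hpy, hpz, hyp, hyq, hzp, hzq⟩ := hFqrep g hg
      have hne1 : f1 ≠ g := by
        intro h
        have : p ∈ s(y,z) := by rw [← hgeq, ← h, hf1eq]; exact Sym2.mem_mk_left _ _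
        rw [Sym2.mem_iff] at this
        rcases this with h' | h'
        · exact hyp h'.symm
        · exact hzp h'.symm
      have hne2 : f2 ≠ g := by
        intro h
        have : p ∈ s(y,z) := by rw [← hgeq, ← h, hf2eq]; exact Sym2.mem_mk_left _ _
        rw [Sym2.mem_iff] at this
        rcases this with h' | h'
        · exact hyp h'.symm
        · exact hzp h'.symm
      have hc1 : Conflict G s(p,x1) s(y,z) := by
        have := hpair f1 (hFpE _ hf1) g (hFqE _ hg) hne1
        rwa [hf1eq, hgeq] at this
      have hc2 : Conflict G s(p,x2) s(y,z) := by
        have := hpair f2 (hFpE _ hf2) g (hFqE _ hg) hne2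
        rwa [hf2eq, hgeq] at this
      have ha1 : G.Adj x1 z := n4_lemma t3 c4 hpq hpx1 hx1q hyz hqy hqz hpy hpz hyp hzp hc1
      have ha2 : G.Adj x2 z := n4_lemma t3 c4 hpq hpx2 hx2q hyz hqy hqz hpy hpz hyp hzp hc2
      exact c4 x1 z x2 p ha1 ha2.symm hpx2.symm hpx1 hx12 hzp
    rw [hFq]
    simp only [Finset.card_empty]
    omega
  · push_neg at h2
    by_cases h1 : Fp.card = 1
    · -- exactly one edge at p : Fq has at most one element
      obtain ⟨f, hfeq⟩ := Finset.card_eq_one.mp h1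
      have hf : f ∈ Fp := hfeq ▸ Finset.mem_singleton_self f
      obtain ⟨x, hfx, hpx, hxq⟩ := hFprep f hf
      have hcard : Fq.card ≤ 1 := by
        rw [Finset.card_le_one]
        intro g hg g' hg'
        by_contra hgg'
        obtain ⟨y, z, hgeq, hyz, hqy, hqz, hpy, hpz, hyp, hyq, hzp, hzq⟩ := hFqrep g hg
        obtain ⟨y', z', hg'eq, hy'z', hqy', hqz', hpy', hpz', hy'p, hy'q, hz'p, hz'q⟩ :=
          hFqrep g' hg'
        have hnefg : f ≠ g := by
          intro h
          have : p ∈ s(y,z) := by rw [← hgeq, ← h, hfx]; exact Sym2.mem_mk_left _ _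
          rw [Sym2.mem_iff] at this
          rcases this with h' | h'
          · exact hyp h'.symm
          · exact hzp h'.symm
        have hnefg' : f ≠ g' := by
          intro h
          have : p ∈ s(y',z') := by rw [← hg'eq, ← h, hfx]; exact Sym2.mem_mk_left _ _
          rw [Sym2.mem_iff] at this
          rcases this with h' | h'
          · exact hy'p h'.symm
          · exact hz'p h'.symm
        have hc1 : Conflict G s(p,x) s(y,z) := by
          have := hpair f (hFpE _ hf) g (hFqE _ hg) hnefg
          rwa [hfx, hgeq] at this
        have hc2 : Conflict G s(p,x) s(y',z') := by
          have := hpair f (hFpE _ hf) g' (hFqE _ hg') hnefg'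
          rwa [hfx, hg'eq] at this
        have hxz : G.Adj x z := n4_lemma t3 c4 hpq hpx hxq hyz hqy hqz hpy hpz hyp hzp hc1
        have hxz' : G.Adj x z' :=
          n4_lemma t3 c4 hpq hpx hxq hy'z' hqy' hqz' hpy' hpz' hy'p hz'p hc2
        by_cases hyy' : y = y'
        · have hzz' : z ≠ z' := by
            rintro rfl
            exact hgg' (by rw [hgeq, hg'eq, hyy'])
          have hxy : x ≠ y := by rintro rfl; exact hpy hpx
          exact c4 x z y z' hxz hyz.symm (by rw [hyy']; exact hy'z') hxz'.symm hxy hzz'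
        · have hcgg : Conflict G s(y,z) s(y',z') := by
            have := hpair g (hFqE _ hg) g' (hFqE _ hg') hgg'
            rwa [hgeq, hg'eq] at this
          have := h1_lemma t3 c4 hqy hqy' hyz hy'z' hqz hqz' hzq hz'q hyy' hcgg
          exact t3 x z z' hxz hxz' this.2
      omega
    · -- no edge at p
      have h0 : Fp.card = 0 := by omega
      rcases Finset.eq_empty_or_nonempty Fq with hFqe | ⟨g₀, hg₀⟩
      · rw [hFqe]
        simp only [Finset.card_empty]
        omega
      · obtain ⟨y₀, z₀, hg₀eq, hyz₀, hqy₀, hqz₀, hpy₀, hpz₀, hy₀p, hy₀q, hz₀p, hz₀q⟩ :=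
          hFqrep g₀ hg₀
        by_cases hall : ∀ g ∈ Fq, y₀ ∈ g
        · -- all edges of Fq pass through y₀
          have hsub : Fq ⊆ ((nb y₀).erase q).image (fun w => s(y₀, w)) := by
            intro g hg
            obtain ⟨w, rfl⟩ := Sym2.mem_iff_exists.mp (hall g hg)
            have hadj : G.Adj y₀ w := G.mem_edgeSet.mp (hE _ (hFqE _ hg))
            have hqg : q ∉ s(y₀,w) := (Finset.mem_filter.mp hg).2.2.1
            have hwq : w ≠ q := by rintro rfl; exact hqg (Sym2.mem_mk_right _ _)
            exact Finset.mem_image.mpr ⟨w, Finset.mem_erase.mpr ⟨hwq, (hnb y₀ w).mpr hadj⟩, rfl⟩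
          have hle : Fq.card ≤ ((nb y₀).erase q).card :=
            (Finset.card_le_card hsub).trans Finset.card_image_le
          have hqmem : q ∈ nb y₀ := (hnb y₀ q).mpr hqy₀.symm
          have := Finset.card_erase_add_one hqmem
          have := hnbcard y₀
          omega
        · push_neg at hall
          obtain ⟨g₁, hg₁, hy₀g₁⟩ := hall
          obtain ⟨y₁, z₁, hg₁eq, hyz₁, hqy₁, hqz₁, hpy₁, hpz₁, hy₁p, hy₁q, hz₁p, hz₁q⟩ :=
            hFqrep g₁ hg₁
          have hy10 : y₁ ≠ y₀ := by
            rintro rfl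
            exact hy₀g₁ (by rw [hg₁eq]; exact Sym2.mem_mk_left _ _)
          have hz10 : z₁ ≠ y₀ := by
            rintro rfl
            exact hy₀g₁ (by rw [hg₁eq]; exact Sym2.mem_mk_right _ _)
          have hne01 : g₀ ≠ g₁ := by
            intro h
            exact hy₀g₁ (by rw [← h, hg₀eq]; exact Sym2.mem_mk_left _ _)
          have hc01 : Conflict G s(y₀,z₀) s(y₁,z₁) := by
            have := hpair g₀ (hFqE _ hg₀) g₁ (hFqE _ hg₁) hne01
            rwa [hg₀eq, hg₁eq] at this
          have hB := h1_lemma t3 c4 hqy₀ hqy₁ hyz₀ hyz₁ hqz₀ hqz₁ hz₀q hz₁q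
            (Ne.symm hy10) hc01
          have hsub : Fq ⊆ {g₀, g₁} := by
            intro g₂ hg₂
            by_contra hno
            simp only [Finset.mem_insert, Finset.mem_singleton] at hno
            push_neg at hno
            obtain ⟨hn0, hn1⟩ := hno
            obtain ⟨y₂, z₂, hg₂eq, hyz₂, hqy₂, hqz₂, hpy₂, hpz₂, hy₂p, hy₂q, hz₂p, hz₂q⟩ :=
              hFqrep g₂ hg₂
            have hc20 : Conflict G s(y₂,z₂) s(y₀,z₀) := by
              have := hpair g₂ (hFqE _ hg₂) g₀ (hFqE _ hg₀) hn0
              rwa [hg₂eq, hg₀eq] at this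
            have hc21 : Conflict G s(y₂,z₂) s(y₁,z₁) := by
              have := hpair g₂ (hFqE _ hg₂) g₁ (hFqE _ hg₁) hn1
              rwa [hg₂eq, hg₁eq] at this
            by_cases h20 : y₂ = y₀
            · have h21 : y₂ ≠ y₁ := by rw [h20]; exact Ne.symm hy10
              have hA := h1_lemma t3 c4 hqy₂ hqy₁ hyz₂ hyz₁ hqz₂ hqz₁ hz₂q hz₁q h21 hc21
              have hzz : z₂ ≠ z₀ := by
                rintro rfl
                exact hn0 (by rw [hg₂eq, hg₀eq, h20])
              exact c4 y₀ z₀ z₁ z₂ hyz₀ hB.2 hA.2.symm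
                (by rw [← h20]; exact hyz₂.symm) (Ne.symm hz10) (Ne.symm hzz)
            · by_cases h21 : y₂ = y₁
              · have hA := h1_lemma t3 c4 hqy₂ hqy₀ hyz₂ hyz₀ hqz₂ hqz₀ hz₂q hz₀q h20 hc20
                have hzz : z₂ ≠ z₁ := by
                  rintro rfl
                  exact hn1 (by rw [hg₂eq, hg₁eq, h21])
                have hy1z0 : y₁ ≠ z₀ := by
                  intro h
                  exact hqz₀ (h ▸ hqy₁)
                exact c4 y₁ z₁ z₀ z₂ hyz₁ hB.2.symm hA.2.symm
                  (by rw [← h21]; exact hyz₂.symm) hy1z0 (Ne.symm hzz)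
              · have hA := h1_lemma t3 c4 hqy₂ hqy₀ hyz₂ hyz₀ hqz₂ hqz₀ hz₂q hz₀q h20 hc20
                have hA' := h1_lemma t3 c4 hqy₂ hqy₁ hyz₂ hyz₁ hqz₂ hqz₁ hz₂q hz₁q h21 hc21
                exact t3 z₂ z₀ z₁ hA.2 hA'.2 hB.2
          have hle2 : Fq.card ≤ 2 := by
            refine (Finset.card_le_card hsub).trans ?_
            refine (Finset.card_insert_le _ _).trans ?_
            simp
          omega
end Aux

section Main

private lemma big_bound [Fintype V] {G : SimpleGraph V} {d : ℕ} (hd : 3 ≤ d)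
    (hΔ : ∀ w : V, (G.neighborSet w).ncard ≤ d)
    (t3 : ∀ a b c : V, G.Adj a b → G.Adj a c → G.Adj b c → False)
    (c4 : ∀ a b c e : V, G.Adj a b → G.Adj b c → G.Adj c e → G.Adj e a → a ≠ c → b ≠ e → False)
    {M : Set (Sym2 V)} (hind : IsInducedMatching G M) (hstab : LSStable G M)
    {u v : V} (he : s(u,v) ∈ M) :
    (CSet G s(u,v)).ncard + (PCSet G M s(u,v)).ncard ≤ 2 * d ^ 2 := by
  have huv : G.Adj u v := G.mem_edgeSet.mp (hind.1 he)
  obtain ⟨k, rfl⟩ : ∃ k, d = k + 1 := ⟨d - 1, by omega⟩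
  set Cf := (Set.toFinite (CSet G s(u,v))).toFinset with hCf
  set Pf := (Set.toFinite (PCSet G M s(u,v))).toFinset with hPf
  have hCmem : ∀ f, f ∈ Cf ↔ (f ∈ G.edgeSet ∧ Conflict G s(u,v) f) := by
    intro f
    rw [hCf, Set.Finite.mem_toFinset]
    exact Iff.rfl
  have hPmem : ∀ f, f ∈ Pf ↔ f ∈ PCSet G M s(u,v) := by
    intro f
    rw [hPf, Set.Finite.mem_toFinset]
  have heC : s(u,v) ∈ Cf := (hCmem _).mpr ⟨hind.1 he,
    ⟨u, Sym2.mem_mk_left u v, u, Sym2.mem_mk_left u v, Or.inl rfl⟩⟩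
  have hePf : s(u,v) ∈ Pf := by
    rw [hPmem]
    refine ⟨(hCmem _).mp heC, ?_⟩
    intro hmem
    simp only [Set.mem_iUnion, Set.mem_diff, Set.mem_singleton_iff] at hmem
    obtain ⟨f, ⟨hfM, hfne⟩, hfC⟩ := hmem
    exact hind.2 f hfM (s(u,v)) he hfne hfC.2
  -- the conflict set
  set Chat := Cf.erase (s(u,v)) with hChat
  have hChatE : ∀ f ∈ Chat, f ∈ G.edgeSet :=
    fun f hf => ((hCmem f).mp (Finset.mem_of_mem_erase hf)).1
  have hChatconf : ∀ f ∈ Chat, Conflict G s(u,v) f :=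
    fun f hf => ((hCmem f).mp (Finset.mem_of_mem_erase hf)).2
  have hCcard : Cf.card ≤ Chat.card + 1 := by
    conv_lhs => rw [← Finset.insert_erase heC]
    exact Finset.card_insert_le _ _
  have hsplitC := card_split (u := u) (v := v) hChatconf
  have hnotChat : s(u,v) ∉ Chat := Finset.notMem_erase _ _
  have hnotChat' : s(v,u) ∉ Chat := by rw [Sym2.eq_swap]; exact hnotChat
  have hc1 := star_bound hΔ huv hChatE hnotChat
  have hc2 := star_bound hΔ huv.symm hChatE hnotChat'
  have hc3 := wing_bound hΔ huv (S := Chat) hChatE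
  have hc4 := wing_bound hΔ huv.symm (S := Chat) hChatE
  -- the private conflict set
  set P₀ := Pf.erase (s(u,v)) with hP₀
  have hP₀P : ∀ f ∈ P₀, f ∈ PCSet G M s(u,v) :=
    fun f hf => (hPmem f).mp (Finset.mem_of_mem_erase hf)
  have hP₀E : ∀ f ∈ P₀, f ∈ G.edgeSet := fun f hf => (hP₀P f hf).1.1
  have hP₀conf : ∀ f ∈ P₀, Conflict G s(u,v) f := fun f hf => (hP₀P f hf).1.2
  have hP₀pair : ∀ f ∈ P₀, ∀ g ∈ P₀, f ≠ g → Conflict G f g := by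
    intro f hf g hg hfg
    exact (hstab _ he f (hP₀P f hf) g (hP₀P g hg) hfg).2
  have hPcard : Pf.card ≤ P₀.card + 1 := by
    conv_lhs => rw [← Finset.insert_erase hePf]
    exact Finset.card_insert_le _ _
  have hsplitP := card_split (u := u) (v := v) hP₀conf
  have hnotP₀ : s(u,v) ∉ P₀ := Finset.notMem_erase _ _
  have hnotP₀' : s(v,u) ∉ P₀ := by rw [Sym2.eq_swap]; exact hnotP₀
  have hkey1 := key_bound hd hΔ t3 c4 huv hP₀E hnotP₀ hP₀pair
  have hkey2 := key_bound hd hΔ t3 c4 huv.symm hP₀E hnotP₀' hP₀pair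
  have hCn : (CSet G s(u,v)).ncard = Cf.card := Set.ncard_eq_toFinset_card _ _
  have hPn : (PCSet G M s(u,v)).ncard = Pf.card := Set.ncard_eq_toFinset_card _ _
  rw [hCn, hPn]
  nlinarith [hCcard, hsplitC, hc1, hc2, hc3, hc4, hPcard, hsplitP, hkey1, hkey2]

/-- lower bound for locally optimal induced matchings in `{C₃,C₄}`-free graphs. -/
theorem stmt9 [Fintype V] (G : SimpleGraph V) (d : ℕ) (hd : 3 ≤ d)
    (hΔ : ∀ v : V, (G.neighborSet v).ncard ≤ d)
    (hC3 : G.CliqueFree 3) (hC4 : C4Free G)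
    (M : Set (Sym2 V)) (hmax : IsMaximalInducedMatching G M) (hstab : LSStable G M) :
    (M.ncard : ℝ) ≥ (G.edgeSet.ncard : ℝ) / (d : ℝ) ^ 2 := by
  have t3 : ∀ a b c : V, G.Adj a b → G.Adj a c → G.Adj b c → False := by
    intro a b c hab hac hbc
    exact hC3 {a, b, c} (SimpleGraph.is3Clique_triple_iff.mpr ⟨hab, hac, hbc⟩)
  have c4 : ∀ a b c e : V, G.Adj a b → G.Adj b c → G.Adj c e → G.Adj e a →
      a ≠ c → b ≠ e → False := by
    intro a b c e hab hbc hce hea hac hbe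
    exact hC4 ⟨a, b, c, e, hab, hbc, hce, hea,
      fun h => t3 a b c hab h hbc, fun h => t3 b c e hbc h hce, hac, hbe⟩
  have hind := hmax.1
  have hcover : ∀ f ∈ G.edgeSet, ∃ e ∈ M, f ∈ CSet G e := by
    intro f
    induction f using Sym2.ind with
    | _ a b =>
      intro hf
      by_contra hno
      push_neg at hno
      have hself : Conflict G s(a,b) s(a,b) :=
        ⟨a, Sym2.mem_mk_left a b, a, Sym2.mem_mk_left a b, Or.inl rfl⟩
      have hfM : s(a,b) ∉ M := fun hm => hno _ hm ⟨hf, hself⟩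
      have hM' : IsInducedMatching G (insert s(a,b) M) := by
        constructor
        · exact Set.insert_subset hf hind.1
        · intro e1 h1 e2 h2 hne
          rcases Set.mem_insert_iff.mp h1 with rfl | h1 <;>
            rcases Set.mem_insert_iff.mp h2 with rfl | h2
          · exact absurd rfl hne
          · exact fun hc => hno e2 h2 ⟨hf, conflict_symm hc⟩
          · exact fun hc => hno e1 h1 ⟨hf, hc⟩
          · exact hind.2 e1 h1 e2 h2 hne
      have heq := hmax.2 _ hM' (Set.subset_insert _ _)
      exact hfM (heq ▸ Set.mem_insert _ _)
  have hbig : ∀ e ∈ M, (CSet G e).ncard + (PCSet G M e).ncard ≤ 2 * d ^ 2 := by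
    intro e
    induction e using Sym2.ind with
    | _ u v => exact fun he => big_bound hd hΔ t3 c4 hind hstab he
  have hMfin : M.Finite := Set.toFinite M
  have hEfin : G.edgeSet.Finite := Set.toFinite _
  set Mf := hMfin.toFinset with hMf
  set Ef := hEfin.toFinset with hEf
  set mult : Sym2 V → ℕ := fun f => (Mf.filter (fun e => Conflict G e f)).card with hmult
  have hmult1 : ∀ f ∈ Ef, 1 ≤ mult f := by
    intro f hf
    obtain ⟨e, heM, hfC⟩ := hcover f (hEfin.mem_toFinset.mp hf)
    exact Finset.card_pos.mpr ⟨e, Finset.mem_filter.mpr ⟨hMfin.mem_toFinset.mpr heM, hfC.2⟩⟩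
  have hsum : (Ef.card : ℝ) =
      ∑ e ∈ Mf, ∑ f ∈ Ef.filter (fun f => Conflict G e f), ((mult f : ℝ))⁻¹ := by
    calc (Ef.card : ℝ) = ∑ _f ∈ Ef, (1 : ℝ) := by simp
    _ = ∑ f ∈ Ef, (mult f : ℝ) * (mult f : ℝ)⁻¹ := by
        refine Finset.sum_congr rfl fun f hf => ?_
        rw [mul_inv_cancel₀]
        have h1 := hmult1 f hf
        exact_mod_cast (by omega : mult f ≠ 0)
    _ = ∑ f ∈ Ef, ∑ _e ∈ Mf.filter (fun e => Conflict G e f), (mult f : ℝ)⁻¹ := by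
        refine Finset.sum_congr rfl fun f _ => ?_
        rw [Finset.sum_const, nsmul_eq_mul]
    _ = ∑ f ∈ Ef, ∑ e ∈ Mf, if Conflict G e f then (mult f : ℝ)⁻¹ else 0 := by
        refine Finset.sum_congr rfl fun f _ => (Finset.sum_filter _ _)
    _ = ∑ e ∈ Mf, ∑ f ∈ Ef, if Conflict G e f then (mult f : ℝ)⁻¹ else 0 :=
        Finset.sum_comm
    _ = ∑ e ∈ Mf, ∑ f ∈ Ef.filter (fun f => Conflict G e f), (mult f : ℝ)⁻¹ := by
        refine Finset.sum_congr rfl fun e _ => (Finset.sum_filter _ _).symm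
  have hper : ∀ e ∈ Mf,
      ∑ f ∈ Ef.filter (fun f => Conflict G e f), ((mult f : ℝ))⁻¹ ≤ (d : ℝ) ^ 2 := by
    intro e heMf
    have heM : e ∈ M := hMfin.mem_toFinset.mp heMf
    set Cfe := Ef.filter (fun f => Conflict G e f) with hCfe
    set Pfe := Ef.filter (fun f => f ∈ PCSet G M e) with hPfe
    have hPCsub : Pfe ⊆ Cfe := by
      intro f hf
      obtain ⟨hfE, hfP⟩ := Finset.mem_filter.mp hf
      exact Finset.mem_filter.mpr ⟨hfE, hfP.1.2⟩
    have hCset : CSet G e = ↑Cfe := by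
      ext f
      constructor
      · intro h
        exact Finset.mem_coe.mpr (Finset.mem_filter.mpr ⟨hEfin.mem_toFinset.mpr h.1, h.2⟩)
      · intro h
        have h' := Finset.mem_filter.mp (Finset.mem_coe.mp h)
        exact ⟨hEfin.mem_toFinset.mp h'.1, h'.2⟩
    have hPset : PCSet G M e = ↑Pfe := by
      ext f
      constructor
      · intro h
        exact Finset.mem_coe.mpr (Finset.mem_filter.mpr ⟨hEfin.mem_toFinset.mpr h.1.1, h⟩)
      · intro h
        exact (Finset.mem_filter.mp (Finset.mem_coe.mp h)).2
    have hbig' := hbig e heM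
    rw [hCset, hPset, Set.ncard_coe_finset, Set.ncard_coe_finset] at hbig'
    have hb1 : ∑ f ∈ Pfe, ((mult f : ℝ))⁻¹ ≤ (Pfe.card : ℝ) := by
      have := Finset.sum_le_card_nsmul Pfe (fun f => ((mult f : ℝ))⁻¹) 1 ?_
      · simpa using this
      · intro f hf
        have hfE : f ∈ Ef := (Finset.mem_filter.mp hf).1
        have h1 := hmult1 f hfE
        have : (1 : ℝ) ≤ (mult f : ℝ) := by exact_mod_cast h1
        exact inv_le_one_of_one_le₀ this
    have hb2 : ∑ f ∈ Cfe \ Pfe, ((mult f : ℝ))⁻¹ ≤ ((Cfe.card : ℝ) - Pfe.card) * (1/2) := by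
      have hcard : ((Cfe \ Pfe).card : ℝ) = (Cfe.card : ℝ) - Pfe.card := by
        rw [Finset.card_sdiff_of_subset hPCsub]
        rw [Nat.cast_sub (Finset.card_le_card hPCsub)]
      have := Finset.sum_le_card_nsmul (Cfe \ Pfe) (fun f => ((mult f : ℝ))⁻¹) (1/2) ?_
      · rw [nsmul_eq_mul] at this
        rw [← hcard]
        exact this
      · intro f hf
        obtain ⟨hfC, hfnP⟩ := Finset.mem_sdiff.mp hf
        obtain ⟨hfE, hconf⟩ := Finset.mem_filter.mp hfC
        have hfedge : f ∈ G.edgeSet := hEfin.mem_toFinset.mp hfE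
        have hfCSet : f ∈ CSet G e := ⟨hfedge, hconf⟩
        have hfnPC : f ∉ PCSet G M e := fun h => hfnP (Finset.mem_filter.mpr ⟨hfE, h⟩)
        have hmem : f ∈ ⋃ f' ∈ M \ {e}, CSet G f' := by
          by_contra hnm
          exact hfnPC ⟨hfCSet, hnm⟩
        simp only [Set.mem_iUnion, Set.mem_diff, Set.mem_singleton_iff] at hmem
        obtain ⟨e', ⟨he'M, he'ne⟩, hfC'⟩ := hmem
        have h2 : 2 ≤ mult f := by
          have : 1 < (Mf.filter (fun e => Conflict G e f)).card :=
            Finset.one_lt_card.mpr ⟨e, Finset.mem_filter.mpr ⟨hMfin.mem_toFinset.mpr heM, hconf⟩,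
              e', Finset.mem_filter.mpr ⟨hMfin.mem_toFinset.mpr he'M, hfC'.2⟩,
              fun h => he'ne (h.symm)⟩
          exact this
        have h2' : (2 : ℝ) ≤ (mult f : ℝ) := by exact_mod_cast h2
        calc ((mult f : ℝ))⁻¹ ≤ (2 : ℝ)⁻¹ := by
              apply inv_anti₀ (by norm_num) h2'
        _ = 1/2 := by norm_num
    have hsplit : ∑ f ∈ Cfe, ((mult f : ℝ))⁻¹
        = ∑ f ∈ Cfe \ Pfe, ((mult f : ℝ))⁻¹ + ∑ f ∈ Pfe, ((mult f : ℝ))⁻¹ :=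
      (Finset.sum_sdiff hPCsub).symm
    have hcast : (Cfe.card : ℝ) + (Pfe.card : ℝ) ≤ 2 * (d : ℝ) ^ 2 := by
      exact_mod_cast hbig'
    rw [hsplit]
    linarith
  have htotal : (Ef.card : ℝ) ≤ (Mf.card : ℝ) * (d : ℝ) ^ 2 := by
    rw [hsum]
    calc ∑ e ∈ Mf, ∑ f ∈ Ef.filter (fun f => Conflict G e f), ((mult f : ℝ))⁻¹
        ≤ ∑ _e ∈ Mf, (d : ℝ) ^ 2 := Finset.sum_le_sum hper
    _ = (Mf.card : ℝ) * (d : ℝ) ^ 2 := by rw [Finset.sum_const, nsmul_eq_mul]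
  have hMn : (M.ncard : ℝ) = (Mf.card : ℝ) := by
    rw [Set.ncard_eq_toFinset_card _ hMfin]
  have hEn : (G.edgeSet.ncard : ℝ) = (Ef.card : ℝ) := by
    rw [Set.ncard_eq_toFinset_card _ hEfin]
  have hdpos : (0 : ℝ) < (d : ℝ) ^ 2 := by
    have : (3 : ℝ) ≤ (d : ℝ) := by exact_mod_cast hd
    nlinarith
  rw [ge_iff_le, hMn, hEn, div_le_iff₀ hdpos]
  linarith

end Main
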